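/- arXiv:1405.4409 — 3 statements merged into one kernel-verified Lean document; each statement's English description precedes it below -/
import Mathlib

section
/- For every vector space V over Z_2 of dimension d ≥ 1, there exists a multiset of 8d nonzero vectors in V such that every submultiset containing at least 3/4 of them (i.e., at least 6d of the vectors) spans V. -/
open Finset

variable {d : ℕ}

def dotp (w v : Fin d → ZMod 2) : ZMod 2 := ∑ i, w i * v i

lemma dotp_add_right (w v u : Fin d → ZMod 2) :
    dotp w (v + u) = dotp w v + dotp w u := by
  simp [dotp, mul_add, Finset.sum_add_distrib]

lemma dotp_single (w : Fin d → ZMod 2) (i0 : Fin d) :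
    dotp w (Pi.single i0 1) = w i0 := by
  simp [dotp, Pi.single_apply, mul_ite]

lemma zmod2_cases (x : ZMod 2) : x = 0 ∨ x = 1 := by revert x; decide

lemma dotp_eq (f : (Fin d → ZMod 2) →ₗ[ZMod 2] ZMod 2) (v : Fin d → ZMod 2) :
    f v = dotp (fun i => f (Pi.single i 1)) v := by
  have hs : ∀ i : Fin d, (fun j => if i = j then (1:ZMod 2) else 0) = Pi.single i 1 := by
    intro i; funext j; simp [Pi.single_apply, eq_comm]
  rw [LinearMap.pi_apply_eq_sum_univ f v]
  simp [dotp, mul_comm, hs]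

lemma card_W : Fintype.card (Fin d → ZMod 2) = 2 ^ d := by
  simp [Fintype.card_fun]

lemma add_single_single (v : Fin d → ZMod 2) (i0 : Fin d) :
    v + Pi.single i0 1 + Pi.single i0 1 = v := by
  funext j
  simp only [Pi.add_apply]
  rcases zmod2_cases ((Pi.single i0 1 : Fin d → ZMod 2) j) with h | h <;> rw [h]
  · rw [add_zero, add_zero]
  · rw [add_assoc, show (1:ZMod 2)+1 = 0 by decide, add_zero]

lemma cardA (w : Fin d → ZMod 2) (hw : w ≠ 0) (hd : 1 ≤ d) :
    (univ.filter fun v => dotp w v = 1).card = 2 ^ (d - 1) := by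
  obtain ⟨i0, hi0⟩ : ∃ i0, w i0 ≠ 0 := by
    by_contra h; push_neg at h; exact hw (funext h)
  have hi1 : w i0 = 1 := (zmod2_cases (w i0)).resolve_left hi0
  have key : (univ.filter fun v => dotp w v = 1).card
      = (univ.filter fun v => ¬ (dotp w v = 1)).card := by
    apply Finset.card_nbij' (· + Pi.single i0 1) (· + Pi.single i0 1)
      (left_inv := fun v _ => add_single_single v i0)
      (right_inv := fun v _ => add_single_single v i0)
    · intro v hv
      simp only [mem_coe, mem_filter, mem_univ, true_and] at hv ⊢
      rw [dotp_add_right, dotp_single, hi1, hv]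
      decide
    · intro v hv
      simp only [mem_coe, mem_filter, mem_univ, true_and] at hv ⊢
      rw [dotp_add_right, dotp_single, hi1]
      rcases zmod2_cases (dotp w v) with h | h
      · rw [h]; decide
      · exact absurd h hv
  have hsum := Finset.card_filter_add_card_filter_not
    (s := (univ : Finset (Fin d → ZMod 2))) (p := fun v => dotp w v = 1)
  rw [← key, Finset.card_univ, card_W] at hsum
  have h2 : 2 ^ d = 2 * 2 ^ (d - 1) := by
    rw [← pow_succ']
    congr 1
    omega
  omega

lemma cardB (w : Fin d → ZMod 2) (hw : w ≠ 0) (hd : 1 ≤ d) :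
    (univ.filter fun v : Fin d → ZMod 2 => v ≠ 0 ∧ dotp w v = 0).card = 2 ^ (d - 1) - 1 := by
  have h0 : (univ.filter fun v : Fin d → ZMod 2 => v ≠ 0 ∧ dotp w v = 0)
      = (univ.filter fun v => dotp w v = 0).erase 0 := by
    ext v
    simp only [mem_filter, mem_univ, true_and, mem_erase]
  have hc0 : (univ.filter fun v : Fin d → ZMod 2 => dotp w v = 0).card = 2 ^ (d-1) := by
    have key := cardA w hw hd
    have hsum := Finset.card_filter_add_card_filter_not
      (s := (univ : Finset (Fin d → ZMod 2))) (p := fun v => dotp w v = 1)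
    have he : (univ.filter fun v : Fin d → ZMod 2 => ¬ (dotp w v = 1))
        = univ.filter fun v => dotp w v = 0 := by
      apply Finset.filter_congr
      intro v _
      rcases zmod2_cases (dotp w v) with h | h <;> simp [h]
    rw [he, key, Finset.card_univ, card_W] at hsum
    have h2 : 2 ^ d = 2 * 2 ^ (d - 1) := by
      rw [← pow_succ']; congr 1; omega
    omega
  rw [h0, Finset.card_erase_of_mem, hc0]
  rw [Finset.mem_filter]
  simp [dotp]

lemma poly_key (x : ℕ) :
    2 * (65536 * (x+1)^2 * x^6) ≤ 729 * (2*x+1)^8 := by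
  have h : 729 * (2*x+1)^8 = 2 * (65536 * (x+1)^2 * x^6) +
      (729 + 11664*x + 81648*x^2 + 326592*x^3 + 816480*x^4 + 1306368*x^5
        + 1175296*x^6 + 484352*x^7 + 55552*x^8) := by ring
  omega

lemma main_ineq' (d p q m : ℕ) (hd : 1 ≤ d) (hp1 : 1 ≤ p) (hq : p = q + 1)
    (hm : m = 2*q + 1) (h2 : 2^d = 2*p) :
    m * (4^(8*d) * (p^(2*d) * q^(6*d))) < 3^(6*d) * m^(8*d) := by
  have hA2 : 2 * (65536 * p^2 * q^6) ≤ 729 * m^8 := by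
    rw [hq, hm]; exact poly_key q
  have hrw : 4^(8*d) * (p^(2*d) * q^(6*d)) = (65536 * p^2 * q^6)^d := by
    rw [mul_pow, mul_pow, show (65536:ℕ) = 4^8 by norm_num,
      ← pow_mul, ← pow_mul, ← pow_mul, mul_assoc]
  have hrw2 : 3^(6*d) * m^(8*d) = (729 * m^8)^d := by
    rw [mul_pow, show (729:ℕ) = 3^6 by norm_num, ← pow_mul, ← pow_mul]
  rw [hrw, hrw2]
  have hBpos : 0 < 729 * m^8 := by
    have : 1 ≤ m := by omega
    positivity
  rcases Nat.eq_zero_or_pos q with hq0 | hq1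
  · have hA0 : 65536 * p^2 * q^6 = 0 := by rw [hq0]; ring
    rw [hA0, zero_pow (by omega), Nat.mul_zero]
    exact pow_pos hBpos d
  · have hApos : 0 < 65536 * p^2 * q^6 := by positivity
    calc m * (65536 * p^2 * q^6)^d
        < 2^d * (65536 * p^2 * q^6)^d := by
          exact (Nat.mul_lt_mul_right (pow_pos hApos d)).mpr (by omega)
      _ = (2 * (65536 * p^2 * q^6))^d := by rw [mul_pow 2 (65536 * p^2 * q^6) d]
      _ ≤ (729 * m^8)^d := Nat.pow_le_pow_left hA2 d

lemma main_ineq (d : ℕ) (hd : 1 ≤ d) :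
    (2^d - 1) * (4^(8*d) * ((2^(d-1))^(2*d) * (2^(d-1)-1)^(6*d)))
      < 3^(6*d) * (2^d - 1)^(8*d) := by
  have h2 : 2^d = 2 * 2^(d-1) := by
    rw [← pow_succ']; congr 1; omega
  have hp1 : 1 ≤ 2^(d-1) := Nat.one_le_two_pow
  exact main_ineq' d (2^(d-1)) (2^(d-1)-1) (2^d-1) hd hp1 (by omega) (by omega) h2

lemma choose_sum_bound (d : ℕ) :
    3^(6*d) * (∑ j ∈ Finset.range (2*d+1), Nat.choose (8*d) j) ≤ 4^(8*d) := by
  have hpow : (4:ℕ)^(8*d) = ∑ k ∈ Finset.range (8*d+1), 3^(8*d-k) * Nat.choose (8*d) k := by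
    have := add_pow 1 3 (8*d)
    norm_num at this
    rw [show (4:ℕ) = 1 + 3 by norm_num, this]
  rw [hpow, Finset.mul_sum]
  calc ∑ j ∈ Finset.range (2*d+1), 3^(6*d) * Nat.choose (8*d) j
      ≤ ∑ j ∈ Finset.range (2*d+1), 3^(8*d-j) * Nat.choose (8*d) j := by
        apply Finset.sum_le_sum
        intro j hj
        apply Nat.mul_le_mul_right
        apply Nat.pow_le_pow_right (by norm_num)
        have := Finset.mem_range.mp hj
        omega
    _ ≤ ∑ k ∈ Finset.range (8*d+1), 3^(8*d-k) * Nat.choose (8*d) k := by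
        apply Finset.sum_le_sum_of_subset
        apply Finset.range_subset_range.mpr
        omega

lemma exists_good (d : ℕ) (hd : 1 ≤ d) :
    ∃ t : Fin (8*d) → (Fin d → ZMod 2),
      (∀ i, t i ≠ 0) ∧
      ∀ w : Fin d → ZMod 2, w ≠ 0 →
        2*d+1 ≤ (univ.filter fun i => dotp w (t i) = 1).card := by
  classical
  set p : ℕ := 2^(d-1) with hp
  set q : ℕ := 2^(d-1) - 1 with hq
  set K : ℕ := ∑ j ∈ Finset.range (2*d+1), Nat.choose (8*d) j with hK
  set Ω : Finset (Fin (8*d) → (Fin d → ZMod 2)) :=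
    Fintype.piFinset (fun _ => (univ : Finset (Fin d → ZMod 2)).erase 0) with hΩdef
  have hΩcard : Ω.card = (2^d-1)^(8*d) := by
    rw [hΩdef, Fintype.card_piFinset]
    simp [Finset.card_erase_of_mem, card_W]
  set Bad : (Fin d → ZMod 2) → Finset (Fin (8*d) → (Fin d → ZMod 2)) :=
    fun w => Ω.filter (fun t => (univ.filter fun i => dotp w (t i) = 1).card ≤ 2*d)
    with hBaddef
  -- bound on each Bad w
  have hBad : ∀ w : Fin d → ZMod 2, w ≠ 0 → (Bad w).card ≤ K * (p^(2*d) * q^(6*d)) := by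
    intro w hw
    set A : Finset (Fin d → ZMod 2) := univ.filter (fun v => dotp w v = 1) with hA
    set B : Finset (Fin d → ZMod 2) := univ.filter (fun v => v ≠ 0 ∧ dotp w v = 0) with hB
    have hAcard : A.card = p := cardA w hw hd
    have hBcard : B.card = q := cardB w hw hd
    set I : Finset (Finset (Fin (8*d))) :=
      (univ : Finset (Fin (8*d))).powerset.filter (fun s => s.card ≤ 2*d) with hI
    set PiS : Finset (Fin (8*d)) → Finset (Fin (8*d) → (Fin d → ZMod 2)) :=
      fun s => Fintype.piFinset (fun i => if i ∈ s then A else B) with hPiS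
    have hsub : Bad w ⊆ I.biUnion PiS := by
      intro t ht
      rw [hBaddef, Finset.mem_filter] at ht
      obtain ⟨htΩ, hcard⟩ := ht
      apply Finset.mem_biUnion.mpr
      refine ⟨univ.filter (fun i => dotp w (t i) = 1), ?_, ?_⟩
      · rw [hI, Finset.mem_filter]
        exact ⟨Finset.mem_powerset.mpr (Finset.subset_univ _), hcard⟩
      · rw [hPiS, Fintype.mem_piFinset]
        intro i
        by_cases hi : dotp w (t i) = 1
        · simp only [Finset.mem_filter, mem_univ, true_and, hi, if_true]
          rw [hA, Finset.mem_filter]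
          exact ⟨mem_univ _, hi⟩
        · simp only [Finset.mem_filter, mem_univ, true_and, hi, if_false]
          rw [hB, Finset.mem_filter]
          refine ⟨mem_univ _, ?_, ?_⟩
          · rw [hΩdef, Fintype.mem_piFinset] at htΩ
            have := htΩ i
            simp only [Finset.mem_erase, mem_univ, and_true] at this
            exact this
          · rcases zmod2_cases (dotp w (t i)) with h | h
            · exact h
            · exact absurd h hi
    have hPiScard : ∀ s ∈ I, (PiS s).card ≤ p^(2*d) * q^(6*d) := by
      intro s hs
      rw [hI, Finset.mem_filter] at hs
      obtain ⟨-, hscard⟩ := hs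
      have h1 : (PiS s).card = p^(s.card) * q^(8*d - s.card) := by
        rw [hPiS, Fintype.card_piFinset]
        rw [← Finset.prod_filter_mul_prod_filter_not univ (· ∈ s)]
        have e1 : ∀ i ∈ univ.filter (· ∈ s), (if i ∈ s then A else B).card = p := by
          intro i hi
          rw [Finset.mem_filter] at hi
          rw [if_pos hi.2, hAcard]
        have e2 : ∀ i ∈ univ.filter (¬ · ∈ s), (if i ∈ s then A else B).card = q := by
          intro i hi
          rw [Finset.mem_filter] at hi
          rw [if_neg hi.2, hBcard]
        rw [Finset.prod_congr rfl e1, Finset.prod_congr rfl e2,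
          Finset.prod_const, Finset.prod_const]
        congr 1
        · congr 1
          rw [Finset.filter_univ_mem]
        · congr 1
          have := Finset.card_filter_add_card_filter_not
            (s := (univ : Finset (Fin (8*d)))) (p := (· ∈ s))
          rw [Finset.filter_univ_mem] at this
          simp only [Finset.card_univ, Fintype.card_fin] at this
          omega
      rw [h1]
      have hqp : q ≤ p := by rw [hq, hp]; exact Nat.sub_le _ _
      have hsplit : 8*d - s.card = (2*d - s.card) + 6*d := by omega
      rw [hsplit, pow_add, ← mul_assoc]
      apply Nat.mul_le_mul_right
      have hstep : p^(s.card) * q^(2*d - s.card) ≤ p^(s.card) * p^(2*d - s.card) :=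
        Nat.mul_le_mul_left _ (Nat.pow_le_pow_left hqp _)
      have heq : p^(s.card) * p^(2*d - s.card) = p^(2*d) := by
        rw [← pow_add]; congr 1; omega
      exact le_trans hstep (le_of_eq heq)
    have hIcard : I.card ≤ K := by
      have hsub2 : I ⊆ (Finset.range (2*d+1)).biUnion
          (fun j => Finset.powersetCard j (univ : Finset (Fin (8*d)))) := by
        intro s hs
        rw [hI, Finset.mem_filter] at hs
        apply Finset.mem_biUnion.mpr
        exact ⟨s.card, Finset.mem_range.mpr (by omega),
          Finset.mem_powersetCard.mpr ⟨Finset.subset_univ _, rfl⟩⟩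
      calc I.card
          ≤ ((Finset.range (2*d+1)).biUnion
              (fun j => Finset.powersetCard j (univ : Finset (Fin (8*d))))).card :=
            Finset.card_le_card hsub2
        _ ≤ ∑ j ∈ Finset.range (2*d+1), (Finset.powersetCard j (univ : Finset (Fin (8*d)))).card :=
            Finset.card_biUnion_le
        _ = K := by
            rw [hK]
            apply Finset.sum_congr rfl
            intro j _
            rw [Finset.card_powersetCard]
            simp
    calc (Bad w).card ≤ (I.biUnion PiS).card := Finset.card_le_card hsub
      _ ≤ ∑ s ∈ I, (PiS s).card := Finset.card_biUnion_le
      _ ≤ ∑ s ∈ I, p^(2*d) * q^(6*d) := Finset.sum_le_sum hPiScard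
      _ = I.card * (p^(2*d) * q^(6*d)) := by rw [Finset.sum_const, smul_eq_mul]
      _ ≤ K * (p^(2*d) * q^(6*d)) := Nat.mul_le_mul_right _ hIcard
  -- total bad count
  set BadAll : Finset (Fin (8*d) → (Fin d → ZMod 2)) :=
    ((univ : Finset (Fin d → ZMod 2)).erase 0).biUnion Bad with hBadAll
  have hBadAllcard : BadAll.card < Ω.card := by
    have h1 : BadAll.card ≤ (2^d - 1) * (K * (p^(2*d) * q^(6*d))) := by
      calc BadAll.card ≤ ∑ w ∈ (univ : Finset (Fin d → ZMod 2)).erase 0, (Bad w).card :=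
            Finset.card_biUnion_le
        _ ≤ ∑ w ∈ (univ : Finset (Fin d → ZMod 2)).erase 0, K * (p^(2*d) * q^(6*d)) := by
            apply Finset.sum_le_sum
            intro w hw
            exact hBad w (Finset.mem_erase.mp hw).1
        _ = (2^d - 1) * (K * (p^(2*d) * q^(6*d))) := by
            rw [Finset.sum_const, smul_eq_mul, Finset.card_erase_of_mem (mem_univ _),
              Finset.card_univ, card_W]
    have h2 : (2^d - 1) * (K * (p^(2*d) * q^(6*d))) < (2^d - 1)^(8*d) := by
      have hmain := main_ineq d hd
      have hcs := choose_sum_bound d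
      have h3 : 3^(6*d) * ((2^d - 1) * (K * (p^(2*d) * q^(6*d))))
          ≤ (2^d - 1) * (4^(8*d) * (p^(2*d) * q^(6*d))) := by
        calc 3^(6*d) * ((2^d - 1) * (K * (p^(2*d) * q^(6*d))))
            = (2^d - 1) * ((3^(6*d) * K) * (p^(2*d) * q^(6*d))) := by ring
          _ ≤ (2^d - 1) * (4^(8*d) * (p^(2*d) * q^(6*d))) := by
              apply Nat.mul_le_mul_left
              exact Nat.mul_le_mul_right _ hcs
      have h4 : 3^(6*d) * ((2^d - 1) * (K * (p^(2*d) * q^(6*d))))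
          < 3^(6*d) * (2^d - 1)^(8*d) := lt_of_le_of_lt h3 hmain
      exact lt_of_mul_lt_mul_left h4 (Nat.zero_le _)
    rw [hΩcard]
    exact lt_of_le_of_lt h1 h2
  -- extract a good tuple
  have hssub : BadAll ⊆ Ω := by
    intro t ht
    rw [hBadAll] at ht
    obtain ⟨w, -, hw⟩ := Finset.mem_biUnion.mp ht
    exact Finset.mem_of_mem_filter t hw
  obtain ⟨t, htΩ, htB⟩ : ∃ t ∈ Ω, t ∉ BadAll := by
    by_contra h
    push_neg at h
    exact absurd (Finset.card_le_card h) (not_le.mpr hBadAllcard)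
  refine ⟨t, ?_, ?_⟩
  · intro i
    rw [hΩdef, Fintype.mem_piFinset] at htΩ
    have := htΩ i
    simp only [Finset.mem_erase, mem_univ, and_true] at this
    exact this
  · intro w hw
    have : t ∉ Bad w := by
      intro hmem
      exact htB (Finset.mem_biUnion.mpr ⟨w, Finset.mem_erase.mpr ⟨hw, mem_univ _⟩, hmem⟩)
    rw [hBaddef, Finset.mem_filter] at this
    push_neg at this
    exact this htΩ

/-- Claim 2.1: in a `d`-dimensional vector space over `ℤ/2` (with `d ≥ 1`) there is a
multiset of `8d` nonzero vectors such that every submultiset containing at least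
`3/4` of them (i.e. at least `6d` vectors) spans the whole space. -/
theorem stmt0 (V : Type*) [AddCommGroup V] [Module (ZMod 2) V]
    [FiniteDimensional (ZMod 2) V] (d : ℕ) (hd : 1 ≤ d)
    (hdim : Module.finrank (ZMod 2) V = d) :
    ∃ M : Multiset V, Multiset.card M = 8 * d ∧ (∀ v ∈ M, v ≠ 0) ∧
      ∀ T : Multiset V, T ≤ M → 6 * d ≤ Multiset.card T →
        Submodule.span (ZMod 2) {v : V | v ∈ T} = ⊤ := by
  classical
  let b : Module.Basis (Fin d) (ZMod 2) V :=
    (Module.finBasis (ZMod 2) V).reindex (finCongr hdim)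
  let e : (Fin d → ZMod 2) ≃ₗ[ZMod 2] V := b.equivFun.symm
  obtain ⟨t, ht0, htw⟩ := exists_good d hd
  refine ⟨Multiset.map (fun i => e (t i)) (Finset.univ.val : Multiset (Fin (8*d))), ?_, ?_, ?_⟩
  · rw [Multiset.card_map]
    simp
  · intro v hv
    obtain ⟨i, -, rfl⟩ := Multiset.mem_map.mp hv
    simp only [ne_eq, LinearEquiv.map_eq_zero_iff]
    exact ht0 i
  · intro T hT hTcard
    by_contra hne
    obtain ⟨f, hf0, hfmap⟩ :=
      Submodule.exists_dual_map_eq_bot_of_lt_top (lt_top_iff_ne_top.mpr hne) inferInstance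
    have hfT : ∀ v ∈ T, f v = 0 := by
      intro v hv
      have hv' : v ∈ Submodule.span (ZMod 2) {v : V | v ∈ T} :=
        Submodule.subset_span hv
      have : f v ∈ (Submodule.span (ZMod 2) {v : V | v ∈ T}).map f :=
        Submodule.mem_map_of_mem hv'
      rw [hfmap, Submodule.mem_bot] at this
      exact this
    set g : (Fin d → ZMod 2) →ₗ[ZMod 2] ZMod 2 := f.comp (e : (Fin d → ZMod 2) →ₗ[ZMod 2] V)
      with hg
    set w : Fin d → ZMod 2 := fun i => g (Pi.single i 1) with hwdef
    have hgw : ∀ v, g v = dotp w v := fun v => dotp_eq g v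
    have hw : w ≠ 0 := by
      intro h0
      apply hf0
      apply LinearMap.ext
      intro x
      have : f (e (e.symm x)) = g (e.symm x) := rfl
      rw [e.apply_symm_apply] at this
      rw [this, hgw, h0]
      simp [dotp]
    have hhits := htw w hw
    set M : Multiset V := Multiset.map (fun i => e (t i)) (Finset.univ.val : Multiset (Fin (8*d)))
      with hM
    set P : V → Prop := fun v => f v = 1 with hP
    have hMfilter : Multiset.card (M.filter P) = (univ.filter fun i => dotp w (t i) = 1).card := by
      rw [hM, Multiset.filter_map, Multiset.card_map]
      congr 1
      apply Multiset.filter_congr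
      intro i _
      show f (e (t i)) = 1 ↔ dotp w (t i) = 1
      rw [show f (e (t i)) = g (t i) from rfl, hgw]
    have h1 : 2*d+1 ≤ Multiset.card (M.filter P) := by rw [hMfilter]; exact hhits
    have h2 : Multiset.card (M.filter P) + Multiset.card (M.filter (fun v => ¬ P v))
        = 8*d := by
      rw [← Multiset.card_add, Multiset.filter_add_not, hM, Multiset.card_map]
      simp
    have h3 : T.filter (fun v => ¬ P v) = T := by
      apply Multiset.filter_eq_self.mpr
      intro v hv
      rw [hP]
      simp only [hfT v hv]
      decide
    have h4 : Multiset.card T ≤ Multiset.card (M.filter (fun v => ¬ P v)) := by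
      rw [← h3]
      exact Multiset.card_le_card (Multiset.filter_le_filter _ hT)
    omega
end

section
/- If v_1, …, v_{8d} are chosen independently and uniformly at random from V \ {0}, where V is a Z_2-vector space of dimension d, then the probability that there exists a subspace U of dimension d−1 containing more than 6d of the v_i is at most 2^d · exp(−d), which is less than 1 for all d ≥ 1. -/
open Finset Module in
private lemma stmt2_ker_aux (V : Type*) [AddCommGroup V] [Module (ZMod 2) V] [Fintype V]
    (d : ℕ) (hdim : finrank (ZMod 2) V = d)
    (U : Submodule (ZMod 2) V) (hU : finrank (ZMod 2) U = d - 1) (hd : 1 ≤ d) :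
    ∃ φ : V →ₗ[ZMod 2] ZMod 2, LinearMap.ker φ = U := by
  have hq : finrank (ZMod 2) (V ⧸ U) = 1 := by
    have h := U.finrank_quotient_add_finrank
    rw [hdim, hU] at h
    have hle : finrank (ZMod 2) U ≤ finrank (ZMod 2) V := U.finrank_le
    rw [hdim, hU] at hle
    omega
  obtain ⟨e⟩ := FiniteDimensional.nonempty_linearEquiv_of_finrank_eq
    (by rw [hq, finrank_self] : finrank (ZMod 2) (V ⧸ U) = finrank (ZMod 2) (ZMod 2))
  refine ⟨e.toLinearMap ∘ₗ U.mkQ, ?_⟩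
  rw [LinearMap.ker_comp, LinearEquiv.ker, Submodule.comap_bot, Submodule.ker_mkQ]

open Finset Module Classical in
private lemma stmt2_count_aux (V : Type*) [AddCommGroup V] [Module (ZMod 2) V] [Fintype V]
    (d : ℕ) (hd : 1 ≤ d) (hdim : finrank (ZMod 2) V = d)
    (U : Submodule (ZMod 2) V) (hU : finrank (ZMod 2) U = d - 1) :
    ((Finset.univ : Finset (Fin (8 * d) → {v : V // v ≠ 0})).filter
        (fun v => 6 * d < (Finset.univ.filter (fun i => (v i : V) ∈ U)).card)).card
      * 3 ^ (6 * d + 1) ≤ (2 ^ (d + 1) - 3) ^ (8 * d) := by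
  classical
  set S := {v : V // v ≠ 0}
  set w : S → ℕ := fun s => if (s : V) ∈ U then 3 else 1 with hw
  have hprod : ∀ v : Fin (8 * d) → S,
      ∏ i, w (v i) = 3 ^ (Finset.univ.filter (fun i => (v i : V) ∈ U)).card := by
    intro v
    rw [← Finset.prod_filter_mul_prod_filter_not Finset.univ (fun i => (v i : V) ∈ U)]
    have h1 : ∀ i ∈ Finset.univ.filter (fun i => (v i : V) ∈ U), w (v i) = 3 := by
      intro i hi; simp only [Finset.mem_filter] at hi; simp [hw, hi.2]
    have h2 : ∀ i ∈ Finset.univ.filter (fun i => ¬ (v i : V) ∈ U), w (v i) = 1 := by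
      intro i hi; simp only [Finset.mem_filter] at hi; simp [hw, hi.2]
    rw [Finset.prod_congr rfl h1, Finset.prod_congr rfl h2]
    simp
  have hsum : ∑ s : S, w s = 2 ^ (d + 1) - 3 := by
    have hV : Fintype.card V = 2 ^ d := by
      have h := card_eq_pow_finrank (K := ZMod 2) (V := V)
      rwa [ZMod.card, hdim] at h
    have hUc : (Finset.univ.filter (fun v : V => v ∈ U)).card = 2 ^ (d - 1) := by
      have h := card_eq_pow_finrank (K := ZMod 2) (V := U)
      rw [ZMod.card, hU] at h
      rw [← Fintype.card_subtype]
      exact h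
    have hfull : ∑ v : V, (if v ∈ U then 3 else 1) = 2 ^ (d + 1) := by
      rw [Finset.sum_ite, Finset.sum_const, Finset.sum_const, smul_eq_mul, smul_eq_mul,
        hUc]
      have hcompl : (Finset.univ.filter (fun v : V => ¬ v ∈ U)).card
          = 2 ^ d - 2 ^ (d - 1) := by
        have := Finset.card_filter_add_card_filter_not
          (s := (Finset.univ : Finset V)) (p := fun v : V => v ∈ U)
        rw [hUc, Finset.card_univ, hV] at this
        omega
      rw [hcompl]
      have h2 : 2 ^ d = 2 * 2 ^ (d - 1) := by
        rw [← pow_succ']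
        congr 1
        omega
      have h3 : 2 ^ (d + 1) = 4 * 2 ^ (d - 1) := by
        rw [pow_succ, h2]; ring
      have h4 : 1 ≤ 2 ^ (d - 1) := Nat.one_le_two_pow
      omega
    have hsplit : ∑ v : V, (if v ∈ U then 3 else 1)
        = (∑ s : S, w s) + 3 := by
      rw [← Finset.sum_filter_add_sum_filter_not Finset.univ (fun v : V => v ≠ 0)]
      congr 1
      · rw [Finset.sum_subtype (p := fun v : V => v ≠ 0)
          (Finset.univ.filter (fun v : V => v ≠ 0))
          (by simp) (fun v => if v ∈ U then 3 else 1)]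
      · have : Finset.univ.filter (fun v : V => ¬ v ≠ 0) = {0} := by
          ext v; simp
        rw [this, Finset.sum_singleton, if_pos U.zero_mem]
    omega
  have key : ∀ v ∈ (Finset.univ : Finset (Fin (8 * d) → S)).filter
      (fun v => 6 * d < (Finset.univ.filter (fun i => (v i : V) ∈ U)).card),
      3 ^ (6 * d + 1) ≤ ∏ i, w (v i) := by
    intro v hv
    rw [Finset.mem_filter] at hv
    rw [hprod v]
    exact Nat.pow_le_pow_right (by norm_num) hv.2
  calc ((Finset.univ : Finset (Fin (8 * d) → S)).filter
        (fun v => 6 * d < (Finset.univ.filter (fun i => (v i : V) ∈ U)).card)).card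
      * 3 ^ (6 * d + 1)
      ≤ ∑ v ∈ (Finset.univ : Finset (Fin (8 * d) → S)).filter
        (fun v => 6 * d < (Finset.univ.filter (fun i => (v i : V) ∈ U)).card),
          ∏ i, w (v i) := by
        have := Finset.card_nsmul_le_sum _ _ _ key
        simpa [smul_eq_mul] using this
    _ ≤ ∑ v : Fin (8 * d) → S, ∏ i, w (v i) :=
        Finset.sum_le_sum_of_subset (Finset.filter_subset _ _)
    _ = (∑ s : S, w s) ^ (8 * d) := by
        rw [Finset.sum_pow' Finset.univ w (8 * d), Fintype.piFinset_univ]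
    _ = (2 ^ (d + 1) - 3) ^ (8 * d) := by rw [hsum]

open Classical in
/-- If `v 0, …, v (8d-1)` are chosen independently and uniformly from `V \ {0}`
(modelled by counting tuples in `Fin (8d) → V \ {0}`), then the probability that some
hyperplane `U` (a subspace of dimension `d-1`) contains more than `6d` of the `v i`
is at most `2^d · exp (-d)`, which is less than `1` for `d ≥ 1`. -/
theorem stmt2 (V : Type*) [AddCommGroup V] [Module (ZMod 2) V] [Fintype V]
    (d : ℕ) (hd : 1 ≤ d) (hdim : Module.finrank (ZMod 2) V = d) :
    (((Finset.univ : Finset (Fin (8 * d) → {v : V // v ≠ 0})).filter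
        (fun v => ∃ U : Submodule (ZMod 2) V, Module.finrank (ZMod 2) U = d - 1 ∧
          6 * d < (Finset.univ.filter (fun i => (v i : V) ∈ U)).card)).card : ℝ) ≤
      2 ^ d * Real.exp (-(d : ℝ)) *
        ((Finset.univ : Finset (Fin (8 * d) → {v : V // v ≠ 0})).card : ℝ) ∧
    2 ^ d * Real.exp (-(d : ℝ)) < 1 := by
  classical
  constructor
  · -- main bound
    have harith : (2:ℕ) ^ (d + 1) - 3 ≤ 2 * (2 ^ d - 1) := by
      have h5 : (2:ℕ) ^ (d + 1) = 2 * 2 ^ d := by rw [pow_succ]; ring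
      have h4 : 1 ≤ (2:ℕ) ^ d := Nat.one_le_two_pow
      omega
    haveI : Finite (V →ₗ[ZMod 2] ZMod 2) :=
      Finite.of_injective (fun φ => (φ : V → ZMod 2))
        (by intro a b h; ext v; exact congrFun h v)
    haveI := Fintype.ofFinite (V →ₗ[ZMod 2] ZMod 2)
    have hdual : Fintype.card (V →ₗ[ZMod 2] ZMod 2) = 2 ^ d := by
      have h := Module.card_eq_pow_finrank (K := ZMod 2) (V := V →ₗ[ZMod 2] ZMod 2)
      rw [ZMod.card] at h
      rw [h, Subspace.dual_finrank_eq, hdim]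
    set H := (Finset.univ : Finset (V →ₗ[ZMod 2] ZMod 2)).filter
      (fun φ => Module.finrank (ZMod 2) (LinearMap.ker φ) = d - 1) with hH
    set bad : (V →ₗ[ZMod 2] ZMod 2) → Finset (Fin (8 * d) → {v : V // v ≠ 0}) := fun φ =>
      (Finset.univ : Finset (Fin (8 * d) → {v : V // v ≠ 0})).filter
        (fun v => 6 * d < (Finset.univ.filter
          (fun i => (v i : V) ∈ LinearMap.ker φ)).card) with hbad
    have hHcard : H.card ≤ 2 ^ d := by
      calc H.card ≤ (Finset.univ : Finset (V →ₗ[ZMod 2] ZMod 2)).card :=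
            Finset.card_le_card (Finset.filter_subset _ _)
        _ = 2 ^ d := by rw [Finset.card_univ, hdual]
    -- union bound
    have hsubset : (Finset.univ : Finset (Fin (8 * d) → {v : V // v ≠ 0})).filter
        (fun v => ∃ U : Submodule (ZMod 2) V, Module.finrank (ZMod 2) U = d - 1 ∧
          6 * d < (Finset.univ.filter (fun i => (v i : V) ∈ U)).card)
        ⊆ H.biUnion bad := by
      intro v hv
      rw [Finset.mem_filter] at hv
      obtain ⟨-, U, hU1, hU2⟩ := hv
      obtain ⟨φ, hφ⟩ := stmt2_ker_aux V d hdim U hU1 hd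
      rw [Finset.mem_biUnion]
      refine ⟨φ, ?_, ?_⟩
      · rw [hH, Finset.mem_filter]
        exact ⟨Finset.mem_univ _, by rw [hφ]; exact hU1⟩
      · rw [hbad]; rw [Finset.mem_filter]
        refine ⟨Finset.mem_univ _, ?_⟩
        have : (Finset.univ.filter (fun i => (v i : V) ∈ LinearMap.ker φ))
            = (Finset.univ.filter (fun i => (v i : V) ∈ U)) := by
          apply Finset.filter_congr
          intro i _
          rw [hφ]
        rw [this]
        exact hU2
    have hunion : ((Finset.univ : Finset (Fin (8 * d) → {v : V // v ≠ 0})).filter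
        (fun v => ∃ U : Submodule (ZMod 2) V, Module.finrank (ZMod 2) U = d - 1 ∧
          6 * d < (Finset.univ.filter (fun i => (v i : V) ∈ U)).card)).card
        ≤ ∑ φ ∈ H, (bad φ).card :=
      le_trans (Finset.card_le_card hsubset) (Finset.card_biUnion_le)
    -- per-hyperplane bound
    have hperU : ∀ φ ∈ H, (bad φ).card * 3 ^ (6 * d + 1)
        ≤ 2 ^ (8 * d) * (2 ^ d - 1) ^ (8 * d) := by
      intro φ hφ
      rw [hH, Finset.mem_filter] at hφ
      have h1 := stmt2_count_aux V d hd hdim (LinearMap.ker φ) hφ.2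
      have h2 : (2 ^ (d + 1) - 3) ^ (8 * d) ≤ (2 * (2 ^ d - 1)) ^ (8 * d) :=
        Nat.pow_le_pow_left harith _
      have h3 : (2 * (2 ^ d - 1)) ^ (8 * d) = 2 ^ (8 * d) * (2 ^ d - 1) ^ (8 * d) :=
        mul_pow _ _ _
      calc (bad φ).card * 3 ^ (6 * d + 1) ≤ (2 ^ (d + 1) - 3) ^ (8 * d) := h1
        _ ≤ 2 ^ (8 * d) * (2 ^ d - 1) ^ (8 * d) := h3 ▸ h2
    -- total nat bound
    have hNat : ((Finset.univ : Finset (Fin (8 * d) → {v : V // v ≠ 0})).filter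
        (fun v => ∃ U : Submodule (ZMod 2) V, Module.finrank (ZMod 2) U = d - 1 ∧
          6 * d < (Finset.univ.filter (fun i => (v i : V) ∈ U)).card)).card
        * 3 ^ (6 * d + 1) ≤ 2 ^ d * (2 ^ (8 * d) * (2 ^ d - 1) ^ (8 * d)) := by
      calc _ ≤ (∑ φ ∈ H, (bad φ).card) * 3 ^ (6 * d + 1) :=
            Nat.mul_le_mul_right _ hunion
        _ = ∑ φ ∈ H, (bad φ).card * 3 ^ (6 * d + 1) := Finset.sum_mul _ _ _
        _ ≤ ∑ _φ ∈ H, 2 ^ (8 * d) * (2 ^ d - 1) ^ (8 * d) := Finset.sum_le_sum hperU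
        _ = H.card * (2 ^ (8 * d) * (2 ^ d - 1) ^ (8 * d)) := by
            rw [Finset.sum_const, smul_eq_mul]
        _ ≤ 2 ^ d * (2 ^ (8 * d) * (2 ^ d - 1) ^ (8 * d)) := Nat.mul_le_mul_right _ hHcard
    -- pass to the reals
    have hcardS : Fintype.card {v : V // v ≠ 0} = 2 ^ d - 1 := by
      have h := Module.card_eq_pow_finrank (K := ZMod 2) (V := V)
      rw [ZMod.card, hdim] at h
      rw [Fintype.card_subtype_compl, Fintype.card_subtype_eq (0 : V), h]
    have hCu : ((Finset.univ : Finset (Fin (8 * d) → {v : V // v ≠ 0})).card : ℝ)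
        = (((2 ^ d - 1 : ℕ) : ℝ)) ^ (8 * d) := by
      have h : (Finset.univ : Finset (Fin (8 * d) → {v : V // v ≠ 0})).card
          = (2 ^ d - 1) ^ (8 * d) := by
        rw [Finset.card_univ, Fintype.card_fun, Fintype.card_fin, hcardS]
      rw [h]
      push_cast
      ring
    have hkey : (2:ℝ) ^ (8 * d) * Real.exp d ≤ 3 ^ (6 * d + 1) := by
      have h1 : Real.exp 1 ≤ 729 / 256 :=
        le_of_lt (lt_trans Real.exp_one_lt_d9 (by norm_num))
      have h2 : Real.exp d = Real.exp 1 ^ d := by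
        rw [← Real.exp_nat_mul, mul_one]
      calc (2:ℝ) ^ (8 * d) * Real.exp d = (256:ℝ) ^ d * Real.exp 1 ^ d := by
            rw [pow_mul, h2]; norm_num
        _ ≤ (256:ℝ) ^ d * (729 / 256) ^ d := by gcongr
        _ = (729:ℝ) ^ d := by rw [← mul_pow]; norm_num
        _ = (3:ℝ) ^ (6 * d) := by rw [pow_mul]; norm_num
        _ ≤ (3:ℝ) ^ (6 * d + 1) :=
            pow_le_pow_right₀ (by norm_num) (Nat.le_succ _)
    have hx : (2:ℝ) ^ (8 * d) ≤ Real.exp (-(d:ℝ)) * 3 ^ (6 * d + 1) := by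
      rw [Real.exp_neg, inv_mul_eq_div, le_div_iff₀ (Real.exp_pos _)]
      exact hkey
    have h3 : (0:ℝ) < 3 ^ (6 * d + 1) := by positivity
    rw [hCu, ← mul_le_mul_iff_left₀ h3]
    have hcast : (((Finset.univ : Finset (Fin (8 * d) → {v : V // v ≠ 0})).filter
        (fun v => ∃ U : Submodule (ZMod 2) V, Module.finrank (ZMod 2) U = d - 1 ∧
          6 * d < (Finset.univ.filter (fun i => (v i : V) ∈ U)).card)).card : ℝ)
        * 3 ^ (6 * d + 1)
        ≤ 2 ^ d * (2 ^ (8 * d) * (((2 ^ d - 1 : ℕ) : ℝ)) ^ (8 * d)) := by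
      exact_mod_cast hNat
    refine le_trans hcast ?_
    calc (2:ℝ) ^ d * (2 ^ (8 * d) * (((2 ^ d - 1 : ℕ) : ℝ)) ^ (8 * d))
        ≤ (2:ℝ) ^ d * ((Real.exp (-(d:ℝ)) * 3 ^ (6 * d + 1))
            * (((2 ^ d - 1 : ℕ) : ℝ)) ^ (8 * d)) := by gcongr
      _ = 2 ^ d * Real.exp (-(d:ℝ)) * (((2 ^ d - 1 : ℕ) : ℝ)) ^ (8 * d)
            * 3 ^ (6 * d + 1) := by ring
  · -- the probability bound is < 1
    have h2e : (2:ℝ) < Real.exp 1 := lt_trans (by norm_num) Real.exp_one_gt_d9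
    have hpow : (2:ℝ) ^ d < Real.exp 1 ^ d :=
      pow_lt_pow_left₀ h2e (by norm_num) (by omega)
    have hexp : Real.exp 1 ^ d = Real.exp d := by rw [← Real.exp_nat_mul, mul_one]
    calc (2:ℝ) ^ d * Real.exp (-(d:ℝ))
        < Real.exp 1 ^ d * Real.exp (-(d:ℝ)) :=
          mul_lt_mul_of_pos_right hpow (Real.exp_pos _)
      _ = 1 := by rw [hexp, ← Real.exp_add]; simp
end

section
/- For every function f: Z_2^n → [0,1] and every ε with 0 < ε < 1/2, there exists a subspace H ≤ Z_2^n of index at most twr(⌈1/ε³⌉) that is ε-regular for f. -/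
open Classical

/-- The affine subspace (coset) `H + g` of `ℤ₂ⁿ`, as a finset. -/
noncomputable def coset {n : ℕ} (H : Submodule (ZMod 2) (Fin n → ZMod 2))
    (g : Fin n → ZMod 2) : Finset (Fin n → ZMod 2) :=
  Finset.univ.filter (fun x => x - g ∈ H)

/-- The sign `(-1)^a` for `a : ℤ/2`. -/
noncomputable def sgn (a : ZMod 2) : ℝ := if a = 0 then 1 else -1

/-- The standard bilinear form `⟨x, η⟩` on `ℤ₂ⁿ`. -/
def ip {n : ℕ} (x η : Fin n → ZMod 2) : ZMod 2 := ∑ i, x i * η i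

/-- The Fourier coefficient `\hat{f|_A}(η) = 𝔼_{x ∈ A}[f(x) (-1)^{⟨x,η⟩}]`. -/
noncomputable def fcoef {n : ℕ} (A : Finset (Fin n → ZMod 2))
    (f : (Fin n → ZMod 2) → ℝ) (η : Fin n → ZMod 2) : ℝ :=
  (∑ x ∈ A, f x * sgn (ip x η)) / A.card

/-- The annihilator `H^⊥` of a subspace `H ≤ ℤ₂ⁿ`. -/
def perp {n : ℕ} (H : Submodule (ZMod 2) (Fin n → ZMod 2)) : Set (Fin n → ZMod 2) :=
  {η | ∀ h ∈ H, ip h η = 0}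

/-- `f` restricted to the coset `H + g` is `ε`-regular: all nontrivial Fourier
coefficients are at most `ε` in absolute value. -/
noncomputable def regularOn {n : ℕ} (H : Submodule (ZMod 2) (Fin n → ZMod 2))
    (g : Fin n → ZMod 2) (f : (Fin n → ZMod 2) → ℝ) (ε : ℝ) : Prop :=
  ∀ η ∉ perp H, |fcoef (coset H g) f η| ≤ ε

/-- `H` is an `ε`-regular subspace for `f`: the restriction of `f` is `ε`-regular on at
least a `(1-ε)` fraction of the cosets of `H` (counted through their representatives
`g ∈ ℤ₂ⁿ`, each coset being counted with multiplicity `|H|`). -/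
noncomputable def regularSubspace {n : ℕ} (H : Submodule (ZMod 2) (Fin n → ZMod 2))
    (f : (Fin n → ZMod 2) → ℝ) (ε : ℝ) : Prop :=
  (1 - ε) * (2 : ℝ) ^ n ≤
    ((Finset.univ.filter (fun g : Fin n → ZMod 2 => regularOn H g f ε)).card : ℝ)

/-- The tower function: `twr 0 = 1`, `twr (h+1) = 2 ^ twr h`. -/
def twr : ℕ → ℕ
  | 0 => 1
  | h + 1 => 2 ^ twr h

/-! ### Auxiliary lemmas -/

section aux

variable {n : ℕ} {H H' : Submodule (ZMod 2) (Fin n → ZMod 2)}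
  {g g' x y η : Fin n → ZMod 2} {a : ZMod 2} {f : (Fin n → ZMod 2) → ℝ} {ε : ℝ}

lemma mem_coset : x ∈ coset H g ↔ x - g ∈ H := by simp [coset]

lemma self_mem_coset : g ∈ coset H g := by simp [mem_coset]

lemma coset_nonempty : (coset H g).Nonempty := ⟨g, self_mem_coset⟩

lemma coset_card_pos : 0 < (coset H g).card := Finset.card_pos.2 coset_nonempty

lemma coset_eq_of_mem (h : g - g' ∈ H) : coset H g = coset H g' := by
  ext x
  simp only [mem_coset]
  constructor <;> intro hx
  · have := H.add_mem hx h; simpa [sub_add_sub_cancel] using this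
  · have := H.sub_mem hx h; simpa [sub_sub_sub_cancel_right] using this

lemma coset_card (H : Submodule (ZMod 2) (Fin n → ZMod 2)) (g : Fin n → ZMod 2) :
    (coset H g).card = Nat.card H := by
  rw [Nat.card_eq_fintype_card, Fintype.card_subtype]
  apply Finset.card_bij' (i := fun a _ => a - g) (j := fun b _ => b + g)
  · intro a ha; simp only [Finset.mem_filter, Finset.mem_univ, true_and]
    exact mem_coset.1 ha
  · intro b hb; simp only [Finset.mem_filter, Finset.mem_univ, true_and] at hb
    simpa [mem_coset] using hb
  · intro a _; abel
  · intro b _; abel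

lemma coset_subset (hle : H' ≤ H) (hx : x ∈ coset H g) : coset H' x ⊆ coset H g := by
  intro y hy
  rw [mem_coset] at *
  have : y - x + (x - g) ∈ H := H.add_mem (hle hy) hx
  simpa [sub_add_sub_cancel] using this

lemma ip_add_left : ip (x + y) η = ip x η + ip y η := by
  simp [ip, add_mul, Finset.sum_add_distrib]

lemma ip_sub_left : ip (x - y) η = ip x η - ip y η := by
  simp [ip, sub_mul, Finset.sum_sub_distrib]

lemma ip_zero_right : ip x (0 : Fin n → ZMod 2) = 0 := by simp [ip]

lemma zmod2_cases_s17 : ∀ a : ZMod 2, a = 0 ∨ a = 1 := by decide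

lemma sgn_mul_self : sgn a * sgn a = 1 := by unfold sgn; split <;> norm_num

lemma sgn_sq : sgn a ^ 2 = 1 := by unfold sgn; split <;> norm_num

lemma sgn_add_one (a : ZMod 2) : sgn (a + 1) = - sgn a := by
  rcases zmod2_cases_s17 a with h | h <;> subst h <;>
    simp [sgn, show (1 + 1 : ZMod 2) = 0 from by decide]

lemma sgn_ip_congr (hη : η ∈ perp H') (hxy : x - y ∈ H') :
    sgn (ip x η) = sgn (ip y η) := by
  have h1 : ip (x - y) η = 0 := hη _ hxy
  have : ip x η = ip y η := by
    have := ip_sub_left (x := x) (y := y) (η := η)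
    rw [h1] at this
    exact (eq_of_sub_eq_zero this.symm)
  rw [this]

lemma sum_sgn_zero (hη : η ∉ perp H) (g : Fin n → ZMod 2) :
    ∑ x ∈ coset H g, sgn (ip x η) = 0 := by
  simp only [perp, Set.mem_setOf_eq, not_forall] at hη
  obtain ⟨h₀, h₀H, h₀ne⟩ := hη
  have hip : ip h₀ η = 1 := (zmod2_cases_s17 _).resolve_left h₀ne
  apply Finset.sum_involution (g := fun a _ => a + h₀)
  · intro a ha
    have : ip (a + h₀) η = ip a η + 1 := by rw [ip_add_left, hip]
    rw [this, sgn_add_one]; ring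
  · intro a ha _
    intro hcon
    have : h₀ = 0 := by
      have h2 : a + h₀ = a := hcon
      simpa using add_eq_left.mp h2
    rw [this] at hip
    simp [ip] at hip
  · intro a ha
    rw [mem_coset] at *
    have : a - g + h₀ ∈ H := H.add_mem ha h₀H
    convert this using 1; abel
  · intro a _
    have : a + h₀ + h₀ = a + (h₀ + h₀) := by abel
    rw [this]
    have : h₀ + h₀ = 0 := by
      ext i; have := zmod2_cases_s17 (h₀ i); rcases this with h | h <;> simp [h]; decide
    simp [this]

/-- Double counting: summing over `H'`-cosets of points of `s`,
when `s` is a union of `H'`-cosets. -/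
lemma sum_coset_double (u : (Fin n → ZMod 2) → ℝ) {s : Finset (Fin n → ZMod 2)}
    (hs : ∀ x ∈ s, coset H' x ⊆ s) :
    ∑ x ∈ s, ∑ y ∈ coset H' x, u y = (Nat.card H' : ℝ) * ∑ y ∈ s, u y := by
  have key : ∀ x ∈ s, ∑ y ∈ coset H' x, u y = ∑ y ∈ s, if y - x ∈ H' then u y else 0 := by
    intro x hx
    rw [← Finset.sum_filter]
    congr 1
    ext y
    simp only [Finset.mem_filter, mem_coset]
    exact ⟨fun h => ⟨hs x hx (mem_coset.2 h), h⟩, fun h => h.2⟩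
  rw [Finset.sum_congr rfl key, Finset.sum_comm]
  rw [Finset.mul_sum]
  apply Finset.sum_congr rfl
  intro y hy
  have : ∀ x ∈ s, (if y - x ∈ H' then u y else 0) = if x ∈ coset H' y then u y else 0 := by
    intro x hx
    congr 1
    simp only [mem_coset, eq_iff_iff]
    constructor <;> intro h
    · have := H'.neg_mem h; simpa using this
    · have := H'.neg_mem h; simpa using this
  rw [Finset.sum_congr rfl this, Finset.sum_ite_mem,
    Finset.inter_eq_right.2 (hs y hy), Finset.sum_const, coset_card]
  simp [mul_comm]

end aux

section aux2

variable {n : ℕ} {H H' : Submodule (ZMod 2) (Fin n → ZMod 2)}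
  {g g' x y η : Fin n → ZMod 2} {f : (Fin n → ZMod 2) → ℝ} {ε : ℝ}

/-- The conditional expectation of `f` on the `H`-coset of `x`. -/
noncomputable def condAvg (H : Submodule (ZMod 2) (Fin n → ZMod 2))
    (f : (Fin n → ZMod 2) → ℝ) (x : Fin n → ZMod 2) : ℝ :=
  (∑ y ∈ coset H x, f y) / (coset H x).card

/-- The energy (mean square of the conditional expectation). -/
noncomputable def energy (H : Submodule (ZMod 2) (Fin n → ZMod 2))
    (f : (Fin n → ZMod 2) → ℝ) : ℝ :=
  (∑ x, condAvg H f x ^ 2) / 2 ^ n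

lemma natCard_pos : (0 : ℝ) < Nat.card H := by
  have : 0 < (coset H (0 : Fin n → ZMod 2)).card := coset_card_pos
  rw [coset_card] at this
  exact_mod_cast this

lemma condAvg_nonneg (hf : ∀ x, f x ∈ Set.Icc (0:ℝ) 1) : 0 ≤ condAvg H f x := by
  apply div_nonneg _ (Nat.cast_nonneg _)
  exact Finset.sum_nonneg fun y _ => (hf y).1

lemma condAvg_le_one (hf : ∀ x, f x ∈ Set.Icc (0:ℝ) 1) : condAvg H f x ≤ 1 := by
  rw [condAvg, div_le_one (by exact_mod_cast coset_card_pos)]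
  calc ∑ y ∈ coset H x, f y ≤ ∑ y ∈ coset H x, 1 :=
        Finset.sum_le_sum fun y _ => (hf y).2
    _ = (coset H x).card := by simp

lemma energy_nonneg : 0 ≤ energy H f :=
  div_nonneg (Finset.sum_nonneg fun x _ => sq_nonneg _) (by positivity)

lemma energy_le_one (hf : ∀ x, f x ∈ Set.Icc (0:ℝ) 1) : energy H f ≤ 1 := by
  rw [energy, div_le_one (by positivity)]
  calc ∑ x, condAvg H f x ^ 2 ≤ ∑ x : Fin n → ZMod 2, 1 := by
        apply Finset.sum_le_sum
        intro x _
        have h1 := condAvg_nonneg (H := H) (x := x) hf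
        have h2 := condAvg_le_one (H := H) (x := x) hf
        nlinarith
    _ = (2:ℝ) ^ n := by simp [Fintype.card_pi]

/-- Conditional expectation against an `H'`-invariant character. -/
lemma sum_condAvg_sgn (hle : H' ≤ H) (hη : η ∈ perp H') (g : Fin n → ZMod 2) :
    ∑ x ∈ coset H g, condAvg H' f x * sgn (ip x η)
      = ∑ x ∈ coset H g, f x * sgn (ip x η) := by
  have h'pos : (0 : ℝ) < Nat.card H' := natCard_pos
  have step1 : ∀ x ∈ coset H g, condAvg H' f x * sgn (ip x η)
      = (∑ y ∈ coset H' x, f y * sgn (ip y η)) / (Nat.card H' : ℝ) := by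
    intro x _
    rw [condAvg, coset_card]
    rw [div_mul_eq_mul_div, Finset.sum_mul]
    congr 1
    apply Finset.sum_congr rfl
    intro y hy
    rw [sgn_ip_congr hη (mem_coset.1 hy)]
  rw [Finset.sum_congr rfl step1, ← Finset.sum_div,
    sum_coset_double _ (fun x hx => coset_subset hle hx)]
  field_simp

lemma zero_mem_perp : (0 : Fin n → ZMod 2) ∈ perp H' := fun h _ => by
  simp [ip]

lemma sum_condAvg (hle : H' ≤ H) (g : Fin n → ZMod 2) :
    ∑ x ∈ coset H g, condAvg H' f x = ∑ x ∈ coset H g, f x := by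
  have := sum_condAvg_sgn (f := f) hle (zero_mem_perp (H' := H')) g
  simpa [ip_zero_right, sgn] using this

end aux2

section aux3

variable {n : ℕ} {H H' : Submodule (ZMod 2) (Fin n → ZMod 2)}
  {g x η : Fin n → ZMod 2} {f : (Fin n → ZMod 2) → ℝ} {ε : ℝ}

lemma coset_sq_le (hle : H' ≤ H) (g : Fin n → ZMod 2) :
    ((coset H g).card : ℝ) * condAvg H f g ^ 2 ≤ ∑ x ∈ coset H g, condAvg H' f x ^ 2 := by
  set A := coset H g with hA
  have hN : (0:ℝ) < A.card := by exact_mod_cast coset_card_pos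
  set N := (A.card : ℝ)
  set F := fun x => condAvg H' f x with hF
  have hSF : ∑ x ∈ A, F x = ∑ x ∈ A, f x := sum_condAvg hle g
  have hm : condAvg H f g * N = ∑ x ∈ A, F x := by
    rw [condAvg, hSF]; field_simp
    exact mul_div_cancel_right₀ _ hN.ne'
  have cs := Finset.sum_mul_sq_le_sq_mul_sq A F (fun _ => (1:ℝ))
  simp only [mul_one, one_pow, Finset.sum_const, nsmul_eq_mul] at cs
  show N * condAvg H f g ^ 2 ≤ ∑ x ∈ A, F x ^ 2
  have key : (N * condAvg H f g ^ 2) * N ≤ (∑ x ∈ A, F x ^ 2) * N := by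
    calc (N * condAvg H f g ^ 2) * N = (condAvg H f g * N) ^ 2 := by ring
      _ = (∑ x ∈ A, F x) ^ 2 := by rw [hm]
      _ ≤ (∑ i ∈ A, F i ^ 2) * (A.card : ℝ) := cs
      _ = (∑ x ∈ A, F x ^ 2) * N := rfl
  exact le_of_mul_le_mul_right key hN

lemma coset_sq_add_le (hle : H' ≤ H) (hη' : η ∈ perp H') (hη : η ∉ perp H)
    (g : Fin n → ZMod 2) :
    ((coset H g).card : ℝ) * (condAvg H f g ^ 2 + fcoef (coset H g) f η ^ 2)
      ≤ ∑ x ∈ coset H g, condAvg H' f x ^ 2 := by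
  set A := coset H g with hA
  have hN : (0:ℝ) < A.card := by exact_mod_cast coset_card_pos
  set N := (A.card : ℝ) with hNdef
  set F := fun x => condAvg H' f x with hF
  set m := condAvg H f g with hmdef
  set c := fcoef A f η with hcdef
  set χ := fun x => sgn (ip x η) with hχ
  have hSF : ∑ x ∈ A, F x = ∑ x ∈ A, f x := sum_condAvg hle g
  have hSFχ : ∑ x ∈ A, F x * χ x = ∑ x ∈ A, f x * χ x := sum_condAvg_sgn hle hη' g
  have hχ0 : ∑ x ∈ A, χ x = 0 := sum_sgn_zero hη g
  have hχ2 : ∑ x ∈ A, χ x ^ 2 = N := by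
    simp only [hχ, sgn_sq]
    simp [hNdef]
  have hm : m * N = ∑ x ∈ A, F x := by
    rw [hmdef, condAvg, hSF]; field_simp
    exact mul_div_cancel_right₀ _ hN.ne'
  have hc : c * N = ∑ x ∈ A, F x * χ x := by
    rw [hcdef, fcoef, hSFχ]; field_simp
    exact mul_div_cancel_right₀ _ hN.ne'
  have cs := Finset.sum_mul_sq_le_sq_mul_sq A (fun x => F x - m) χ
  have e1 : ∑ x ∈ A, (F x - m) * χ x = c * N := by
    rw [hc]
    rw [Finset.sum_congr rfl (fun x _ => sub_mul (F x) m (χ x)), Finset.sum_sub_distrib,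
      ← Finset.mul_sum, hχ0]
    ring
  have e2 : ∑ x ∈ A, (F x - m) ^ 2 = (∑ x ∈ A, F x ^ 2) - m ^ 2 * N := by
    have expand : ∀ x ∈ A, (F x - m) ^ 2 = F x ^ 2 - 2 * m * F x + m ^ 2 := by
      intro x _; ring
    rw [Finset.sum_congr rfl expand]
    rw [Finset.sum_add_distrib, Finset.sum_sub_distrib, ← Finset.mul_sum, ← hm,
      Finset.sum_const, nsmul_eq_mul]
    ring
  rw [e1, e2, hχ2] at cs
  show N * (m ^ 2 + c ^ 2) ≤ ∑ x ∈ A, F x ^ 2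
  have key : (N * (m ^ 2 + c ^ 2)) * N ≤ (∑ x ∈ A, F x ^ 2) * N := by
    have expand : (N * (m ^ 2 + c ^ 2)) * N = m ^ 2 * N * N + (c * N) ^ 2 := by ring
    rw [expand]
    nlinarith [cs]
  exact le_of_mul_le_mul_right key hN

end aux3

section counting

variable {n : ℕ} {H : Submodule (ZMod 2) (Fin n → ZMod 2)}
  {f : (Fin n → ZMod 2) → ℝ} {ε : ℝ}

lemma fiber_eq_coset (q : (Fin n → ZMod 2) ⧸ H) :
    Finset.univ.filter (fun g : Fin n → ZMod 2 => Submodule.Quotient.mk g = q)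
      = coset H q.out := by
  ext g
  simp only [Finset.mem_filter, Finset.mem_univ, true_and, mem_coset]
  have hmk : (Submodule.Quotient.mk q.out : (Fin n → ZMod 2) ⧸ H) = q := Quotient.out_eq' q
  constructor
  · intro h
    exact (Submodule.Quotient.eq H).mp (h.trans hmk.symm)
  · intro h
    exact ((Submodule.Quotient.eq H).mpr h).trans hmk

lemma card_filter_mk_mem (T : Finset ((Fin n → ZMod 2) ⧸ H)) :
    (Finset.univ.filter (fun g : Fin n → ZMod 2 => Submodule.Quotient.mk g ∈ T)).card
      = T.card * Nat.card H := by
  rw [Finset.card_eq_sum_card_fiberwise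
    (f := fun g : Fin n → ZMod 2 => (Submodule.Quotient.mk g : (Fin n → ZMod 2) ⧸ H))
    (s := Finset.univ.filter (fun g : Fin n → ZMod 2 => Submodule.Quotient.mk g ∈ T))
    (t := T) (fun g hg => (Finset.mem_filter.1 hg).2)]
  have : ∀ q ∈ T,
      ((Finset.univ.filter (fun g : Fin n → ZMod 2 => Submodule.Quotient.mk g ∈ T)).filter
        (fun g => Submodule.Quotient.mk g = q)).card = Nat.card H := by
    intro q hq
    rw [← coset_card H q.out, ← fiber_eq_coset]
    congr 1
    ext g
    simp only [Finset.mem_filter, Finset.mem_univ, true_and]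
    constructor
    · exact fun h => h.2
    · intro h; exact ⟨h ▸ hq, h⟩
  rw [Finset.sum_congr rfl this, Finset.sum_const, smul_eq_mul]

lemma card_quotient_mul_card : Nat.card ((Fin n → ZMod 2) ⧸ H) * Nat.card H = 2 ^ n := by
  have h1 := card_filter_mk_mem (H := H) Finset.univ
  simp only [Finset.mem_univ, Finset.filter_true, Finset.card_univ] at h1
  rw [Nat.card_eq_fintype_card, ← h1]
  simp [Fintype.card_pi]

lemma quotient_card_pow2 :
    ∃ d : ℕ, Nat.card ((Fin n → ZMod 2) ⧸ H) = 2 ^ d := by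
  refine ⟨Module.finrank (ZMod 2) ((Fin n → ZMod 2) ⧸ H), ?_⟩
  rw [Nat.card_eq_fintype_card]
  have := Module.card_eq_pow_finrank (K := ZMod 2) (V := (Fin n → ZMod 2) ⧸ H)
  simpa using this

lemma regularOn_congr (h : (Submodule.Quotient.mk g : (Fin n → ZMod 2) ⧸ H)
    = Submodule.Quotient.mk g') : regularOn H g f ε ↔ regularOn H g' f ε := by
  rw [Submodule.Quotient.eq] at h
  unfold regularOn
  rw [coset_eq_of_mem h]

lemma card_regular_eq (H : Submodule (ZMod 2) (Fin n → ZMod 2))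
    (f : (Fin n → ZMod 2) → ℝ) (ε : ℝ) :
    (Finset.univ.filter (fun g : Fin n → ZMod 2 => regularOn H g f ε)).card
      = (Finset.univ.filter (fun q : (Fin n → ZMod 2) ⧸ H =>
          regularOn H q.out f ε)).card * Nat.card H := by
  rw [← card_filter_mk_mem]
  congr 1
  ext g
  simp only [Finset.mem_filter, Finset.mem_univ, true_and]
  rw [regularOn_congr (g := g) (g' := (Submodule.Quotient.mk g : (Fin n → ZMod 2) ⧸ H).out)
    ((Quotient.out_eq' _).symm)]

end counting

section increment

variable {n : ℕ} {f : (Fin n → ZMod 2) → ℝ} {ε : ℝ}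

/-- `x ↦ ⟨x, η⟩` as a linear map. -/
def phi (η : Fin n → ZMod 2) : (Fin n → ZMod 2) →ₗ[ZMod 2] ZMod 2 where
  toFun x := ip x η
  map_add' x y := ip_add_left
  map_smul' c x := by
    simp [ip, Finset.mul_sum, mul_assoc]

set_option maxHeartbeats 1000000 in
lemma increment (hε0 : 0 < ε) (hε1 : ε < 1/2)
    (H : Submodule (ZMod 2) (Fin n → ZMod 2)) (hnr : ¬ regularSubspace H f ε) :
    ∃ H' : Submodule (ZMod 2) (Fin n → ZMod 2),
      Nat.card ((Fin n → ZMod 2) ⧸ H') ≤ 2 ^ (Nat.card ((Fin n → ZMod 2) ⧸ H)) ∧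
      energy H f + ε ^ 3 ≤ energy H' f := by
  classical
  set K := Nat.card ((Fin n → ZMod 2) ⧸ H) with hK
  set hcard := Nat.card H with hh
  have hKh : K * hcard = 2 ^ n := card_quotient_mul_card
  have hpos : (0:ℝ) < hcard := natCard_pos
  -- the bad cosets
  set B := Finset.univ.filter
    (fun q : (Fin n → ZMod 2) ⧸ H => ¬ regularOn H q.out f ε) with hB
  have hBcard : (ε : ℝ) * K < B.card := by
    unfold regularSubspace at hnr
    push_neg at hnr
    have hcnt := card_regular_eq H f ε
    have hsplit : (Finset.univ.filter
        (fun q : (Fin n → ZMod 2) ⧸ H => regularOn H q.out f ε)).card + B.card = K := by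
      rw [hB, Finset.card_filter_add_card_filter_not, Finset.card_univ, hK,
        Nat.card_eq_fintype_card]
    have h1 : ((Finset.univ.filter (fun q : (Fin n → ZMod 2) ⧸ H =>
        regularOn H q.out f ε)).card : ℝ) * hcard < (1 - ε) * 2 ^ n := by
      push_cast [hcnt] at hnr
      exact hnr
    have h2 : ((2:ℝ) ^ n) = (K : ℝ) * hcard := by exact_mod_cast hKh.symm
    have h3 : ((Finset.univ.filter (fun q : (Fin n → ZMod 2) ⧸ H =>
        regularOn H q.out f ε)).card : ℝ) = (K : ℝ) - B.card := by
      push_cast [← hsplit]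
      ring
    rw [h3, h2] at h1
    nlinarith
  set c := ⌈ε * K⌉₊ with hc
  have hcB : c ≤ B.card := by
    rw [hc, Nat.ceil_le]
    exact_mod_cast hBcard.le
  obtain ⟨S, hSB, hScard⟩ := Finset.exists_subset_card_eq hcB
  -- witnesses of irregularity
  have hwit : ∀ q ∈ S, ∃ η : Fin n → ZMod 2,
      η ∉ perp H ∧ ε < |fcoef (coset H q.out) f η| := by
    intro q hq
    have := (Finset.mem_filter.1 (hSB hq)).2
    unfold regularOn at this
    push_neg at this
    exact this
  choose η hη1 hη2 using hwit
  -- the refined subspace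
  set ψ : (Fin n → ZMod 2) →ₗ[ZMod 2] ((Fin n → ZMod 2) ⧸ H) × (↥S → ZMod 2) :=
    LinearMap.prod H.mkQ (LinearMap.pi (fun q : ↥S => phi (η q.1 q.2))) with hψ
  refine ⟨LinearMap.ker ψ, ?_, ?_⟩
  · -- index bound
    have e1 : Nat.card ((Fin n → ZMod 2) ⧸ LinearMap.ker ψ)
        = Nat.card (LinearMap.range ψ) :=
      Nat.card_congr (LinearMap.quotKerEquivRange ψ).toEquiv
    have e2 : Nat.card (LinearMap.range ψ)
        ≤ Nat.card (((Fin n → ZMod 2) ⧸ H) × (↥S → ZMod 2)) :=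
      Nat.card_le_card_of_injective _ Subtype.val_injective
    have e3 : Nat.card (((Fin n → ZMod 2) ⧸ H) × (↥S → ZMod 2)) = K * 2 ^ c := by
      rw [Nat.card_eq_fintype_card, Fintype.card_prod, Fintype.card_fun]
      rw [Fintype.card_coe, hScard]
      rw [hK, Nat.card_eq_fintype_card]
      norm_num
    have e4 : K * 2 ^ c ≤ 2 ^ K := by
      obtain ⟨d, hd⟩ := quotient_card_pow2 (H := H)
      rw [← hK] at hd
      rcases Nat.eq_zero_or_pos d with hd0 | hd1
      · subst hd0
        simp only [pow_zero] at hd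
        have hc1 : c ≤ 1 := by
          rw [hc, Nat.ceil_le, hd]
          push_cast
          linarith
        rw [hd]
        calc 1 * 2 ^ c ≤ 1 * 2 ^ 1 :=
              Nat.mul_le_mul_left _ (Nat.pow_le_pow_right (by norm_num) hc1)
          _ ≤ 2 ^ 1 := by norm_num
      · have hcle : c ≤ 2 ^ (d - 1) := by
          rw [hc, Nat.ceil_le, hd]
          have h2d : ((2:ℝ) ^ d) = 2 * 2 ^ (d-1) := by
            rw [← pow_succ']
            congr 1
            omega
          have : (ε : ℝ) * 2 ^ d ≤ 2 ^ (d-1) := by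
            rw [h2d]
            nlinarith [pow_pos (show (0:ℝ) < 2 by norm_num) (d-1)]
          calc (ε : ℝ) * (2 ^ d : ℕ) = ε * (2:ℝ) ^ d := by push_cast; ring
            _ ≤ 2 ^ (d-1) := this
            _ = ((2 ^ (d-1) : ℕ) : ℝ) := by push_cast; ring
        have hdle : d ≤ 2 ^ (d - 1) := by
          have := Nat.lt_two_pow_self (n := d - 1)
          omega
        rw [hd, ← pow_add]
        apply Nat.pow_le_pow_right (by norm_num)
        calc d + c ≤ 2 ^ (d-1) + 2 ^ (d-1) := Nat.add_le_add hdle hcle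
          _ = 2 ^ d := by
            rw [← two_mul, ← pow_succ']
            congr 1
            omega
    calc Nat.card ((Fin n → ZMod 2) ⧸ LinearMap.ker ψ)
        = Nat.card (LinearMap.range ψ) := e1
      _ ≤ Nat.card (((Fin n → ZMod 2) ⧸ H) × (↥S → ZMod 2)) := e2
      _ = K * 2 ^ c := e3
      _ ≤ 2 ^ K := e4
  · -- energy increment
    set H' := LinearMap.ker ψ with hH'
    have hle : H' ≤ H := by
      intro x hx
      have hx0 : ψ x = 0 := hx
      have : H.mkQ x = 0 := congrArg Prod.fst hx0
      rwa [← Submodule.Quotient.mk_eq_zero H]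
    have hηperp : ∀ (q : (Fin n → ZMod 2) ⧸ H) (hq : q ∈ S), η q hq ∈ perp H' := by
      intro q hq z hz
      have hz0 : ψ z = 0 := hz
      exact congrArg (fun w => w.2 ⟨q, hq⟩) hz0
    clear_value H'
    -- per-coset estimate
    have perg : ∀ g : Fin n → ZMod 2, (hcard : ℝ) *
        (condAvg H f g ^ 2 +
          (if (Submodule.Quotient.mk g : (Fin n → ZMod 2) ⧸ H) ∈ S then ε ^ 2 else 0))
          ≤ ∑ x ∈ coset H g, condAvg H' f x ^ 2 := by
      intro g
      by_cases hg : (Submodule.Quotient.mk g : (Fin n → ZMod 2) ⧸ H) ∈ S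
      · rw [if_pos hg]
        have hout : coset H g
            = coset H (Submodule.Quotient.mk g : (Fin n → ZMod 2) ⧸ H).out := by
          apply coset_eq_of_mem
          exact (Submodule.Quotient.eq H).mp ((Quotient.out_eq' _).symm)
        have hcs := coset_sq_add_le (f := f) hle (hηperp _ hg) (hη1 _ hg) g
        have hfc : ε ^ 2 ≤ fcoef (coset H g) f (η _ hg) ^ 2 := by
          rw [hout]
          calc ε ^ 2
              ≤ |fcoef (coset H (Submodule.Quotient.mk g :
                  (Fin n → ZMod 2) ⧸ H).out) f (η _ hg)| ^ 2 :=
                pow_le_pow_left₀ hε0.le (hη2 _ hg).le 2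
            _ = _ := sq_abs _
        rw [coset_card] at hcs
        nlinarith [hcs, hfc, hpos]
      · rw [if_neg hg, add_zero]
        have := coset_sq_le (f := f) hle g
        rw [coset_card] at this
        exact this
    -- sum over all g
    have hglobal : (hcard : ℝ) * (∑ g, condAvg H f g ^ 2 + ε ^ 2 * (c * hcard))
        ≤ (hcard : ℝ) * ∑ x, condAvg H' f x ^ 2 := by
      have hsum := Finset.sum_le_sum (fun g (_ : g ∈ Finset.univ) => perg g)
      have hdouble : ∑ g : Fin n → ZMod 2, ∑ x ∈ coset H g, condAvg H' f x ^ 2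
          = (hcard : ℝ) * ∑ x, condAvg H' f x ^ 2 := by
        rw [sum_coset_double _ (fun x _ => Finset.subset_univ _)]
      have hite : ∑ g : Fin n → ZMod 2,
          (if (Submodule.Quotient.mk g : (Fin n → ZMod 2) ⧸ H) ∈ S then (ε:ℝ) ^ 2 else 0)
          = ε ^ 2 * (c * hcard) := by
        rw [← Finset.sum_filter, Finset.sum_const, card_filter_mk_mem S, hScard]
        push_cast
        ring
      rw [hdouble] at hsum
      calc (hcard : ℝ) * (∑ g, condAvg H f g ^ 2 + ε ^ 2 * (c * hcard))
          = ∑ g : Fin n → ZMod 2, (hcard : ℝ) *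
            (condAvg H f g ^ 2 +
              (if (Submodule.Quotient.mk g : (Fin n → ZMod 2) ⧸ H) ∈ S
                then ε ^ 2 else 0)) := by
            rw [← Finset.mul_sum]
            congr 1
            rw [Finset.sum_add_distrib, hite]
        _ ≤ (hcard : ℝ) * ∑ x, condAvg H' f x ^ 2 := hsum
    have hmain : ∑ g, condAvg H f g ^ 2 + ε ^ 2 * (c * hcard)
        ≤ ∑ x, condAvg H' f x ^ 2 :=
      le_of_mul_le_mul_left hglobal hpos
    have hch : ε * 2 ^ n ≤ (c : ℝ) * hcard := by
      have h1 : (ε * K : ℝ) ≤ c := Nat.le_ceil _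
      have h2 : ((2:ℝ) ^ n) = (K : ℝ) * hcard := by exact_mod_cast hKh.symm
      rw [h2]
      calc ε * ((K:ℝ) * hcard) = (ε * K) * hcard := by ring
        _ ≤ (c : ℝ) * hcard := mul_le_mul_of_nonneg_right h1 hpos.le
    have h2n : (0:ℝ) < 2 ^ n := by positivity
    have hfinal : ∑ g, condAvg H f g ^ 2 + ε ^ 3 * 2 ^ n
        ≤ ∑ x, condAvg H' f x ^ 2 := by
      have : ε ^ 3 * 2 ^ n ≤ ε ^ 2 * (c * hcard) := by
        calc ε ^ 3 * 2 ^ n = ε ^ 2 * (ε * 2 ^ n) := by ring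
          _ ≤ ε ^ 2 * (c * hcard) := mul_le_mul_of_nonneg_left hch (sq_nonneg _)
      linarith
    rw [energy, energy, div_add' _ _ _ (ne_of_gt h2n)]
    gcongr

end increment

section main

variable {n : ℕ} {f : (Fin n → ZMod 2) → ℝ} {ε : ℝ}

lemma card_quotient_top :
    Nat.card ((Fin n → ZMod 2) ⧸ (⊤ : Submodule (ZMod 2) (Fin n → ZMod 2))) = 1 := by
  have : Subsingleton ((Fin n → ZMod 2) ⧸ (⊤ : Submodule (ZMod 2) (Fin n → ZMod 2))) := by
    constructor
    intro a b
    induction a using Quotient.ind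
    induction b using Quotient.ind
    have h : ∀ z : Fin n → ZMod 2, (Quotient.mk _ z :
        (Fin n → ZMod 2) ⧸ (⊤ : Submodule (ZMod 2) (Fin n → ZMod 2)))
        = Submodule.Quotient.mk z := fun z => rfl
    rw [h, h, Submodule.Quotient.eq]
    trivial
  exact Nat.card_eq_one_iff_unique.mpr ⟨this, inferInstance⟩

lemma twr_lt_succ (k : ℕ) : twr k < twr (k + 1) := by
  show twr k < 2 ^ twr k
  exact Nat.lt_two_pow_self

lemma iterate_reg (hε0 : 0 < ε) (hε1 : ε < 1/2) (k : ℕ) :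
    ∃ H : Submodule (ZMod 2) (Fin n → ZMod 2),
      Nat.card ((Fin n → ZMod 2) ⧸ H) ≤ twr k ∧
      (regularSubspace H f ε ∨ (k : ℝ) * ε ^ 3 ≤ energy H f) := by
  induction k with
  | zero =>
    refine ⟨⊤, ?_, Or.inr ?_⟩
    · rw [card_quotient_top]
      exact le_refl (twr 0)
    · simpa using energy_nonneg (H := ⊤) (f := f)
  | succ k ih =>
    obtain ⟨H, hcard, hor⟩ := ih
    by_cases hr : regularSubspace H f ε
    · exact ⟨H, le_trans hcard (twr_lt_succ k).le, Or.inl hr⟩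
    · have hen : (k : ℝ) * ε ^ 3 ≤ energy H f := hor.resolve_left hr
      obtain ⟨H', hc', he'⟩ := increment hε0 hε1 H hr
      refine ⟨H', ?_, Or.inr ?_⟩
      · calc Nat.card ((Fin n → ZMod 2) ⧸ H')
            ≤ 2 ^ Nat.card ((Fin n → ZMod 2) ⧸ H) := hc'
          _ ≤ 2 ^ twr k := Nat.pow_le_pow_right (by norm_num) hcard
          _ = twr (k + 1) := rfl
      · push_cast
        linarith

end main

/-- Green's arithmetic regularity lemma in `ℤ₂ⁿ` (Theorem 1.2): for every
`0 < ε < 1/2`, every `f : ℤ₂ⁿ → [0,1]` has an `ε`-regular subspace `H` of index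
(= number of cosets, `2^{n - dim H}`) at most `twr ⌈1/ε³⌉`. -/
theorem stmt17 (ε : ℝ) (hε0 : 0 < ε) (hε1 : ε < 1 / 2) (n : ℕ)
    (f : (Fin n → ZMod 2) → ℝ) (hf : ∀ x, f x ∈ Set.Icc (0 : ℝ) 1) :
    ∃ H : Submodule (ZMod 2) (Fin n → ZMod 2),
      Nat.card ((Fin n → ZMod 2) ⧸ H) ≤ twr ⌈1 / ε ^ 3⌉₊ ∧
      regularSubspace H f ε := by
  classical
  set m := ⌈1 / ε ^ 3⌉₊ with hm
  obtain ⟨H, hcard, hor⟩ := iterate_reg (f := f) hε0 hε1 m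
  rcases hor with hr | hen
  · exact ⟨H, hcard, hr⟩
  · by_cases hr : regularSubspace H f ε
    · exact ⟨H, hcard, hr⟩
    · exfalso
      obtain ⟨H', _, he'⟩ := increment hε0 hε1 H hr
      have hε3 : (0:ℝ) < ε ^ 3 := by positivity
      have hm1 : (1:ℝ) ≤ (m : ℝ) * ε ^ 3 := by
        have h1 : (1 / ε ^ 3 : ℝ) ≤ m := Nat.le_ceil _
        have := mul_le_mul_of_nonneg_right h1 hε3.le
        rwa [one_div, inv_mul_cancel₀ (ne_of_gt hε3)] at this
      have hle1 : energy H' f ≤ 1 := energy_le_one hf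
      linarith
end
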